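/- Let A = F·P. For every u ∈ ℂ^M, the PhaseCut quadratic form satisfies uᴴ·M_b·u = Σ_{m ∉ Λ} |z(u)_m|², i.e., the PhaseCut cost u^*·diag(b)·(I − A·Aᴴ)·diag(b)·u equals the squared ℓ²-norm of the restriction of z(u) = Fᴴ·(b ⊙ u) to the complement of the support set Λ. -/

import Mathlib

open Matrix Finset

/-- **PhaseCut cost as energy leakage outside the support.**
`uᴴ · M_b · u = Σ_{m ∉ Λ} |z(u)_m|²` where `M_b = diag(b)(I − AAᴴ)diag(b)`,
`A = F·P` and `z(u) = Fᴴ·(b ⊙ u)`. -/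
theorem phasecut_cost_eq_leakage
    (M N : ℕ) (hM : 0 < M) (hN : 0 < N)
    (F : Matrix (Fin M) (Fin M) ℂ) (hF : Fᴴ * F = 1)
    (emb : Fin N → Fin M) (hemb : Function.Injective emb)
    (P : Matrix (Fin M) (Fin N) ℂ)
    (hP : ∀ i j, P i j = if i = emb j then 1 else 0)
    (A : Matrix (Fin M) (Fin N) ℂ) (hA : A = F * P)
    (b : Fin M → ℝ) (hb : ∀ m, 0 ≤ b m)
    (z : (Fin M → ℂ) → Fin M → ℂ)
    (hz : ∀ u, z u = Fᴴ *ᵥ (fun m => (b m : ℂ) * u m))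
    (Mb : Matrix (Fin M) (Fin M) ℂ)
    (hMb : Mb = Matrix.diagonal (fun m => (b m : ℂ)) * (1 - A * Aᴴ) *
        Matrix.diagonal (fun m => (b m : ℂ)))
    (u : Fin M → ℂ) :
    star u ⬝ᵥ (Mb *ᵥ u) =
      ((∑ m ∈ (Finset.image emb Finset.univ)ᶜ, ‖z u m‖ ^ 2 : ℝ) : ℂ) := by
  have hFF : F * Fᴴ = 1 := mul_eq_one_comm.mp hF
  set w : Fin M → ℂ := fun m => (b m : ℂ) * u m with hw
  set zu : Fin M → ℂ := Fᴴ *ᵥ w with hzu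
  have hzz : z u = zu := hz u
  have hdiag : Matrix.diagonal (fun m => (b m : ℂ)) *ᵥ u = w := by
    ext i; simp [Matrix.mulVec_diagonal, hw]
  have hMbu : Mb *ᵥ u =
      Matrix.diagonal (fun m => (b m : ℂ)) *ᵥ ((1 - A * Aᴴ) *ᵥ w) := by
    rw [← hdiag, Matrix.mulVec_mulVec, Matrix.mulVec_mulVec, hMb]
  have h1 : star u ⬝ᵥ (Mb *ᵥ u) = star w ⬝ᵥ ((1 - A * Aᴴ) *ᵥ w) := by
    rw [hMbu]
    simp only [dotProduct, Matrix.mulVec_diagonal, Pi.star_apply]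
    refine Finset.sum_congr rfl fun i _ => ?_
    simp only [hw, star_mul', Complex.star_def, Complex.conj_ofReal]
    ring
  have key : ∀ x : Fin M → ℂ, star w ⬝ᵥ (F *ᵥ x) = star zu ⬝ᵥ x := by
    intro x
    rw [Matrix.dotProduct_mulVec, hzu, Matrix.star_mulVec, Matrix.conjTranspose_conjTranspose]
  have hwF : w = F *ᵥ zu := by
    rw [hzu, Matrix.mulVec_mulVec, hFF, Matrix.one_mulVec]
  have hww : star w ⬝ᵥ w = star zu ⬝ᵥ zu := by
    have h := key zu
    rw [← hwF] at h
    exact h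
  have hPz : Pᴴ *ᵥ zu = fun j => zu (emb j) := by
    ext j
    simp only [Matrix.mulVec, dotProduct, Matrix.conjTranspose_apply, hP]
    simp [Finset.sum_ite_eq' Finset.univ (emb j)]
  have hstarP : star zu ᵥ* P = star (Pᴴ *ᵥ zu) := by
    conv_rhs => rw [Matrix.star_mulVec, Matrix.conjTranspose_conjTranspose]
  have hproj : star zu ⬝ᵥ (P *ᵥ (Pᴴ *ᵥ zu)) = ∑ j : Fin N, star (zu (emb j)) * zu (emb j) := by
    rw [Matrix.dotProduct_mulVec, hstarP, hPz]
    rfl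
  have hAterm : star w ⬝ᵥ ((A * Aᴴ) *ᵥ w) = ∑ j : Fin N, star (zu (emb j)) * zu (emb j) := by
    have hre : (A * Aᴴ) *ᵥ w = F *ᵥ (P *ᵥ (Pᴴ *ᵥ (Fᴴ *ᵥ w))) := by
      simp only [Matrix.mulVec_mulVec, hA, Matrix.conjTranspose_mul, Matrix.mul_assoc]
    rw [hre, key, ← hzu, hproj]
  have hsplit : star zu ⬝ᵥ zu = ∑ m : Fin M, star (zu m) * zu m := rfl
  rw [h1, Matrix.sub_mulVec, Matrix.one_mulVec, dotProduct_sub, hww, hAterm, hsplit]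
  have himg : ∑ j : Fin N, star (zu (emb j)) * zu (emb j)
      = ∑ m ∈ Finset.image emb Finset.univ, star (zu m) * zu m := by
    rw [Finset.sum_image (fun a _ c _ h => hemb h)]
  rw [himg]
  have hnorm : ∀ m, star (zu m) * zu m = ((‖zu m‖ ^ 2 : ℝ) : ℂ) := by
    intro m
    rw [Complex.star_def, mul_comm, Complex.mul_conj]
    simp [Complex.normSq_eq_norm_sq]
  have hsub : (∑ m : Fin M, star (zu m) * zu m)
      - ∑ m ∈ Finset.image emb Finset.univ, star (zu m) * zu m
      = ∑ m ∈ (Finset.image emb Finset.univ)ᶜ, star (zu m) * zu m := by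
    rw [← Finset.sum_add_sum_compl (Finset.image emb Finset.univ)]
    ring
  rw [hsub, hzz, Complex.ofReal_sum]
  exact Finset.sum_congr rfl fun m _ => hnorm m
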